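/- Let X be a finite subset of ℝ^d that spans ℝ^d, let Δ̂ : X → [0,∞) satisfy min_{x∈X} Δ̂_x = 0, and let ξ > 0. Suppose p* is a distribution on X with S(p*) invertible that minimizes the function p ↦ Σ_{x∈X} p_x Δ̂_x − (2/ξ)·ln det S(p) over all distributions p on X with S(p) invertible. Then (i) Σ_{x∈X} p*_x Δ̂_x ≤ 2d/ξ, and (ii) xᵀ S(p*)^{-1} x ≤ ξ·Δ̂_x/2 + d for every x ∈ X. -/

import Mathlib

open Finset

/-- `Smat X p` is the matrix `S(p) = ∑_{x ∈ X} p_x · x xᵀ`. -/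
noncomputable def Smat {d : ℕ} (X : Finset (Fin d → ℝ)) (p : (Fin d → ℝ) → ℝ) :
    Matrix (Fin d) (Fin d) ℝ :=
  ∑ x ∈ X, p x • Matrix.vecMulVec x x

/-- `p` is a probability distribution on the finite set `X`. -/
def IsDistOn {d : ℕ} (X : Finset (Fin d → ℝ)) (p : (Fin d → ℝ) → ℝ) : Prop :=
  (∀ x ∈ X, 0 ≤ p x) ∧ ∑ x ∈ X, p x = 1

section Helpers

open Matrix

lemma quad_one' {d : ℕ} (a v : Fin d → ℝ) :
    v ⬝ᵥ (vecMulVec a a) *ᵥ v = (a ⬝ᵥ v)^2 := by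
  simp only [vecMulVec_apply, mulVec, dotProduct]
  simp only [mul_assoc]
  simp only [← Finset.mul_sum]
  simp only [← mul_assoc]
  rw [sq, ← Finset.sum_mul]
  congr 1
  exact Finset.sum_congr rfl fun i _ => mul_comm _ _

lemma quad_form_Smat' {d : ℕ} (X : Finset (Fin d → ℝ)) (p : (Fin d → ℝ) → ℝ)
    (v : Fin d → ℝ) :
    v ⬝ᵥ (∑ x ∈ X, p x • Matrix.vecMulVec x x) *ᵥ v = ∑ x ∈ X, p x * (x ⬝ᵥ v)^2 := by
  classical
  induction X using Finset.induction with
  | empty => simp [Matrix.mulVec]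
  | insert _ _ h ih =>
    rw [Finset.sum_insert h, Finset.sum_insert h, Matrix.add_mulVec, dotProduct_add,
      ih, Matrix.smul_mulVec, dotProduct_smul, smul_eq_mul, quad_one']

lemma Smat_isHermitian' {d : ℕ} (X : Finset (Fin d → ℝ)) (p : (Fin d → ℝ) → ℝ) :
    (Smat X p).IsHermitian := by
  ext i j
  simp [Smat, Matrix.IsHermitian, Matrix.conjTranspose_apply, Matrix.sum_apply,
    Matrix.smul_apply, vecMulVec_apply, mul_comm]

lemma Smat_posDef' {d : ℕ} (X : Finset (Fin d → ℝ)) (p : (Fin d → ℝ) → ℝ)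
    (hp0 : ∀ x ∈ X, 0 ≤ p x) (hu : IsUnit (Smat X p)) :
    (Smat X p).PosDef := by
  classical
  have hpsd : (Smat X p).PosSemidef := by
    refine .of_dotProduct_mulVec_nonneg (Smat_isHermitian' X p) fun v => ?_
    rw [star_trivial, Smat, quad_form_Smat']
    exact Finset.sum_nonneg fun x hx => mul_nonneg (hp0 x hx) (sq_nonneg _)
  refine .of_dotProduct_mulVec_pos hpsd.1 fun v hv => ?_
  rcases lt_or_eq_of_le (hpsd.dotProduct_mulVec_nonneg v) with h | h
  · exact h
  · exfalso
    have h0 : (Smat X p) *ᵥ v = 0 := (hpsd.dotProduct_mulVec_zero_iff v).1 h.symm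
    have hinj := Matrix.mulVec_injective_iff_isUnit.2 hu
    exact hv (hinj (by simpa using h0))

lemma mul_vecMulVec' {d : ℕ} (M : Matrix (Fin d) (Fin d) ℝ) (u v : Fin d → ℝ) :
    M * vecMulVec u v = vecMulVec (M *ᵥ u) v := by
  ext i j
  simp [Matrix.mul_apply, vecMulVec_apply, Matrix.mulVec, dotProduct,
    Finset.sum_mul, mul_assoc]

lemma smul_vecMulVec' {d : ℕ} (s : ℝ) (u v : Fin d → ℝ) :
    s • vecMulVec u v = vecMulVec (s • u) v := by
  ext i j; simp [vecMulVec_apply, mul_assoc]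

lemma det_one_add_vecMulVec' {d : ℕ} (u v : Fin d → ℝ) :
    (1 + vecMulVec u v).det = 1 + v ⬝ᵥ u := by
  rw [vecMulVec_eq Unit, det_one_add_replicateCol_mul_replicateRow]

lemma det_perturb' {d : ℕ} (S : Matrix (Fin d) (Fin d) ℝ) (hdet : IsUnit S.det)
    (x : Fin d → ℝ) (t : ℝ) (ht : t < 1) :
    ((1-t) • S + t • vecMulVec x x).det
      = (1-t)^d * S.det * (1 + (t/(1-t)) * (x ⬝ᵥ S⁻¹ *ᵥ x)) := by
  have h1t : (1:ℝ) - t ≠ 0 := by intro h; linarith [h]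
  have cancel : S * (S⁻¹ * vecMulVec x x) = vecMulVec x x := by
    rw [← Matrix.mul_assoc, Matrix.mul_nonsing_inv _ hdet, Matrix.one_mul]
  have expand : (1-t) • S + t • vecMulVec x x
      = S * ((1-t) • (1 : Matrix (Fin d) (Fin d) ℝ) + t • (S⁻¹ * vecMulVec x x)) := by
    rw [Matrix.mul_add, Matrix.mul_smul, Matrix.mul_smul, Matrix.mul_one, cancel]
  have factor : (1-t) • (1 : Matrix (Fin d) (Fin d) ℝ) + t • (S⁻¹ * vecMulVec x x)
      = (1-t) • ((1 : Matrix (Fin d) (Fin d) ℝ) + (t/(1-t)) • (S⁻¹ * vecMulVec x x)) := by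
    rw [smul_add, smul_smul, mul_comm (1-t), div_mul_cancel₀ t h1t]
  rw [expand, factor, det_mul, det_smul, Fintype.card_fin,
    mul_vecMulVec', smul_vecMulVec', det_one_add_vecMulVec']
  have : x ⬝ᵥ (t / (1 - t)) • S⁻¹ *ᵥ x = (t/(1-t)) * (x ⬝ᵥ S⁻¹ *ᵥ x) := by
    simp [dotProduct_smul]
  rw [this]; ring

lemma deriv_nonneg_of_min' (c B A ξ dd : ℝ)
    (hg : ∀ t ∈ Set.Ico (0:ℝ) 1,
      0 ≤ t*(B-A) - (2/ξ)*(dd*Real.log (1-t) + Real.log (1+(t/(1-t))*c))) :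
    0 ≤ (B-A) - (2/ξ)*(c - dd) := by
  set g : ℝ → ℝ := fun t =>
    t*(B-A) - (2/ξ)*(dd*Real.log (1-t) + Real.log (1+(t/(1-t))*c)) with hgdef
  have hmin : IsLocalMinOn g (Set.Ici 0) 0 := by
    have hmem : Set.Ico (0:ℝ) 1 ∈ nhdsWithin 0 (Set.Ici 0) := by
      rw [← Set.Ici_inter_Iio]
      exact Filter.inter_mem self_mem_nhdsWithin
        (mem_nhdsWithin_of_mem_nhds (Iio_mem_nhds one_pos))
    refine Filter.eventually_of_mem hmem fun t ht => ?_
    have h0 : g 0 = 0 := by simp [hgdef]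
    rw [h0]
    exact hg t ht
  have hq : HasDerivAt (fun t : ℝ => t / (1 - t)) 1 0 := by
    have := (hasDerivAt_id (0:ℝ)).div ((hasDerivAt_id (0:ℝ)).const_sub 1) (by norm_num)
    exact this.congr_deriv (by norm_num)
  have hu : HasDerivAt (fun t : ℝ => 1 + (t/(1-t))*c) c 0 := by
    have := (hq.mul_const c).const_add 1
    simpa using this
  have hlog2 : HasDerivAt (fun t : ℝ => Real.log (1 + (t/(1-t))*c)) c 0 := by
    have := hu.log (by norm_num)
    simpa using this
  have hlog1 : HasDerivAt (fun t : ℝ => Real.log (1 - t)) (-1) 0 := by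
    have := ((hasDerivAt_id (0:ℝ)).const_sub 1).log (by norm_num)
    simpa using this
  have hd : HasDerivAt g ((B-A) - (2/ξ)*(dd*(-1) + c)) 0 := by
    have h1 := (hasDerivAt_id (0:ℝ)).mul_const (B-A)
    have h2 := ((hlog1.const_mul dd).add hlog2).const_mul (2/ξ)
    have h3 := h1.sub h2
    exact h3.congr_deriv (by ring)
  have h1 : (1:ℝ) ∈ posTangentConeAt (Set.Ici (0:ℝ)) 0 := by
    apply mem_posTangentConeAt_of_segment_subset
    rw [segment_eq_Icc (by norm_num : (0:ℝ) ≤ 0+1)]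
    intro y hy
    exact hy.1
  have := hmin.hasFDerivWithinAt_nonneg hd.hasFDerivAt.hasFDerivWithinAt h1
  simp only [ContinuousLinearMap.smulRight_apply, ContinuousLinearMap.one_apply,
    ContinuousLinearMap.toSpanSingleton_apply, smul_eq_mul, one_mul] at this
  linarith

end Helpers

open Matrix in
/-- properties of the minimizer of the log-det regularized objective
`p ↦ ∑_x p_x Δ̂_x − (2/ξ) ln det S(p)` over distributions with `S(p)` invertible. -/
theorem logdet_minimizer_properties {d : ℕ} (X : Finset (Fin d → ℝ))
    (hspan : Submodule.span ℝ (↑X : Set (Fin d → ℝ)) = ⊤)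
    (Δ : (Fin d → ℝ) → ℝ) (hΔ0 : ∀ x ∈ X, 0 ≤ Δ x) (hΔmin : ∃ x ∈ X, Δ x = 0)
    (ξ : ℝ) (hξ : 0 < ξ)
    (p : (Fin d → ℝ) → ℝ) (hp : IsDistOn X p) (hpu : IsUnit (Smat X p))
    (hopt : ∀ q : (Fin d → ℝ) → ℝ, IsDistOn X q → IsUnit (Smat X q) →
      (∑ x ∈ X, p x * Δ x) - (2 / ξ) * Real.log (Smat X p).det ≤
        (∑ x ∈ X, q x * Δ x) - (2 / ξ) * Real.log (Smat X q).det) :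
    (∑ x ∈ X, p x * Δ x ≤ 2 * d / ξ) ∧
      ∀ x ∈ X, dotProduct x ((Smat X p)⁻¹.mulVec x) ≤ ξ * Δ x / 2 + d := by
  classical
  obtain ⟨hp0, hp1⟩ := hp
  have hPD : (Smat X p).PosDef := Smat_posDef' X p hp0 hpu
  have hdetpos : 0 < (Smat X p).det := hPD.det_pos
  have hdet : IsUnit (Smat X p).det := hdetpos.ne'.isUnit
  have hSinv : (Smat X p)⁻¹.PosDef := hPD.inv
  have hc0 : ∀ y : Fin d → ℝ, 0 ≤ y ⬝ᵥ (Smat X p)⁻¹ *ᵥ y := fun y => by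
    have := hSinv.posSemidef.dotProduct_mulVec_nonneg y
    simpa using this
  set A := ∑ x ∈ X, p x * Δ x with hA
  have hA0 : 0 ≤ A := Finset.sum_nonneg fun x hx => mul_nonneg (hp0 x hx) (hΔ0 x hx)
  have key : ∀ x ∈ X, x ⬝ᵥ (Smat X p)⁻¹ *ᵥ x ≤ ξ * (Δ x - A) / 2 + d := by
    intro x hx
    set c := x ⬝ᵥ (Smat X p)⁻¹ *ᵥ x with hcdef
    have hg : ∀ t ∈ Set.Ico (0:ℝ) 1,
        0 ≤ t*(Δ x - A) - (2/ξ)*((d:ℝ)*Real.log (1-t) + Real.log (1+(t/(1-t))*c)) := by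
      rintro t ⟨ht0, ht1⟩
      rcases eq_or_lt_of_le ht0 with rfl | ht0'
      · simp
      have h1t : (0:ℝ) < 1 - t := by linarith
      set q : (Fin d → ℝ) → ℝ := fun y => (1-t) * p y + if y = x then t else 0 with hqdef
      have hSq : Smat X q = (1-t) • Smat X p + t • Matrix.vecMulVec x x := by
        simp only [Smat, hqdef, add_smul, mul_smul, ite_smul, zero_smul,
          Finset.sum_add_distrib, ← Finset.smul_sum, Finset.sum_ite_eq', hx, if_pos]
      have hdq : (Smat X q).det = (1-t)^d * (Smat X p).det * (1 + (t/(1-t))*c) := by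
        rw [hSq]
        exact det_perturb' _ hdet x t ht1
      have hs0 : 0 ≤ t/(1-t) := div_nonneg ht0 h1t.le
      have hpos2 : 0 < 1 + (t/(1-t))*c := by nlinarith [hc0 x]
      have hdqpos : 0 < (Smat X q).det := by
        rw [hdq]
        exact mul_pos (mul_pos (pow_pos h1t d) hdetpos) hpos2
      have hq_dist : IsDistOn X q := by
        constructor
        · intro y hy
          have : (0:ℝ) ≤ if y = x then t else 0 := by positivity
          have h2 : 0 ≤ (1-t) * p y := mul_nonneg h1t.le (hp0 y hy)
          simp only [hqdef]
          linarith
        · simp only [hqdef, Finset.sum_add_distrib, ← Finset.mul_sum, hp1,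
            Finset.sum_ite_eq', hx, if_pos]
          try ring
      have hq_unit : IsUnit (Smat X q) := (Matrix.isUnit_iff_isUnit_det _).2 hdqpos.ne'.isUnit
      have hsum : ∑ y ∈ X, q y * Δ y = (1-t)*A + t*Δ x := by
        simp only [hqdef, add_mul, ite_mul, zero_mul, Finset.sum_add_distrib,
          mul_assoc, ← Finset.mul_sum, Finset.sum_ite_eq', hx, if_pos, hA]
      have hlog : Real.log (Smat X q).det
          = (d:ℝ)*Real.log (1-t) + Real.log ((Smat X p).det) + Real.log (1+(t/(1-t))*c) := by
        rw [hdq, Real.log_mul (by positivity) hpos2.ne',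
          Real.log_mul (by positivity) hdetpos.ne', Real.log_pow]
      have hineq := hopt q hq_dist hq_unit
      rw [hsum, hlog] at hineq
      linarith
    have hder := deriv_nonneg_of_min' c (Δ x) A ξ d hg
    have h2 : (2/ξ)*(c - d) ≤ Δ x - A := by linarith
    have h3 : c - (d:ℝ) ≤ ξ*(Δ x - A)/2 := by
      have h4 := mul_le_mul_of_nonneg_left h2 (by positivity : (0:ℝ) ≤ ξ/2)
      calc c - (d:ℝ) = (ξ/2) * ((2/ξ)*(c-d)) := by
            rw [← mul_assoc, div_mul_div_comm, mul_comm ξ 2, div_self (by positivity), one_mul]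
        _ ≤ (ξ/2) * (Δ x - A) := h4
        _ = ξ*(Δ x - A)/2 := by ring
    linarith
  constructor
  · obtain ⟨x0, hx0, hΔx0⟩ := hΔmin
    have h1 := key x0 hx0
    rw [hΔx0] at h1
    have h2 := hc0 x0
    have h3 : 0 ≤ ξ * (0 - A) / 2 + d := le_trans h2 h1
    rw [le_div_iff₀ hξ]
    nlinarith
  · intro x hx
    have h1 := key x hx
    have h2 : ξ * (Δ x - A) / 2 ≤ ξ * Δ x / 2 := by nlinarith
    calc dotProduct x ((Smat X p)⁻¹.mulVec x) ≤ ξ * (Δ x - A) / 2 + d := h1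
      _ ≤ ξ * Δ x / 2 + d := by linarith
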